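/- Let $0 < p < 1$ be a real number and $k$ a positive integer. If $z$ is a complex number satisfying $|z - (1 - p/k)| \le p/k$, then $|z^k - (1-p)| \le p$. -/

import Mathlib

theorem stmt1 (p : ℝ) (hp0 : 0 < p) (hp1 : p < 1) (k : ℕ) (hk : 0 < k) (z : ℂ)
    (hz : ‖z - (1 - p / k)‖ ≤ p / k) :
    ‖z ^ k - (1 - p)‖ ≤ p := by
  have hk' : (0:ℝ) < k := Nat.cast_pos.mpr hk
  have hk1 : (1:ℝ) ≤ k := Nat.one_le_cast.mpr hk
  set a : ℝ := 1 - p / k with ha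
  have hr0 : 0 < p / k := div_pos hp0 hk'
  have hrp : p / k ≤ p := by
    rw [div_le_iff₀ hk']; nlinarith
  have ha0 : 0 < a := by simp only [ha]; nlinarith
  have ha1 : a < 1 := by simp only [ha]; nlinarith
  have hA : ((a : ℝ) : ℂ) = 1 - (p:ℂ)/(k:ℂ) := by push_cast [ha]; ring
  have h1a : 1 - a = p / k := by simp [ha]
  have hzA : ‖z - (a:ℂ)‖ ≤ 1 - a := by
    rw [hA, h1a]; exact hz
  have habs_a : ‖(a:ℂ)‖ = a := by
    rw [Complex.norm_real, Real.norm_of_nonneg ha0.le]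
  have hz1 : ‖z‖ ≤ 1 := by
    have h1 : z = (z - (a:ℂ)) + (a:ℂ) := by ring
    calc ‖z‖ = ‖(z - (a:ℂ)) + (a:ℂ)‖ := by rw [← h1]
      _ ≤ ‖z - (a:ℂ)‖ + ‖(a:ℂ)‖ := norm_add_le _ _
      _ ≤ (1 - a) + a := by rw [habs_a]; linarith
      _ = 1 := by ring
  have key : ‖z ^ k - (a:ℂ) ^ k‖ ≤ 1 - a ^ k := by
    have factor : z ^ k - (a:ℂ) ^ k =
        (∑ i ∈ Finset.range k, z ^ i * (a:ℂ) ^ (k - 1 - i)) * (z - (a:ℂ)) :=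
      (geom_sum₂_mul z (a:ℂ) k).symm
    rw [factor, norm_mul]
    have hsum : ‖∑ i ∈ Finset.range k, z ^ i * (a:ℂ) ^ (k - 1 - i)‖ ≤
        ∑ i ∈ Finset.range k, a ^ (k - 1 - i) := by
      refine (norm_sum_le _ _).trans (Finset.sum_le_sum fun i _ => ?_)
      rw [norm_mul, norm_pow, norm_pow, habs_a]
      have h1 : ‖z‖ ^ i ≤ 1 := pow_le_one₀ (norm_nonneg z) hz1
      nlinarith [pow_nonneg ha0.le (k-1-i), pow_nonneg (norm_nonneg z) i]
    have hsum2 : ∑ i ∈ Finset.range k, a ^ (k - 1 - i) = ∑ i ∈ Finset.range k, a ^ i :=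
      Finset.sum_range_reflect (fun i => a ^ i) k
    have hsnn : 0 ≤ ∑ i ∈ Finset.range k, a ^ i :=
      Finset.sum_nonneg fun i _ => pow_nonneg ha0.le i
    calc ‖∑ i ∈ Finset.range k, z ^ i * (a:ℂ) ^ (k - 1 - i)‖ *
          ‖z - (a:ℂ)‖
        ≤ (∑ i ∈ Finset.range k, a ^ i) * (1 - a) := by
          apply mul_le_mul (le_of_le_of_eq hsum hsum2) hzA (norm_nonneg _) hsnn
      _ = 1 - a ^ k := by linear_combination -(geom_sum_mul a k)
  have hbern : 1 - p ≤ a ^ k := by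
    have h := one_add_mul_le_pow (show (-2:ℝ) ≤ -(p/k) by nlinarith) k
    have hkp : (k:ℝ) * (p / k) = p := by field_simp
    have e1 : (1:ℝ) + -(p/k) = a := by simp [ha]; ring
    have e2 : (1:ℝ) + (k:ℝ) * (-(p/k)) = 1 - p := by rw [mul_neg, hkp]; ring
    rw [e1, e2] at h
    exact h
  have hfin : ((a:ℝ):ℂ)^k - (1 - (p:ℂ)) = ((a^k - (1-p) : ℝ) : ℂ) := by push_cast; ring
  have hsplit : z ^ k - (1 - (p:ℂ)) = (z^k - ((a:ℝ):ℂ)^k) + (((a:ℝ):ℂ)^k - (1 - (p:ℂ))) := by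
    ring
  calc ‖z ^ k - (1 - (p:ℂ))‖
      = ‖(z^k - ((a:ℝ):ℂ)^k) + (((a:ℝ):ℂ)^k - (1 - (p:ℂ)))‖ := by rw [← hsplit]
    _ ≤ ‖z^k - ((a:ℝ):ℂ)^k‖ + ‖((a:ℝ):ℂ)^k - (1 - (p:ℂ))‖ :=
        norm_add_le _ _
    _ ≤ (1 - a^k) + (a^k - (1-p)) := by
        rw [hfin, Complex.norm_real, Real.norm_of_nonneg (by linarith)]
        linarith
    _ = p := by ring
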